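/- The pair (Bor(ℝ²), N) does not have the positive rectangle property: there exists a Borel set C ⊆ ℝ² of positive two-dimensional Lebesgue measure such that for all Borel sets A, B ⊆ ℝ of positive Lebesgue measure, the set (A × B) \ C has positive two-dimensional Lebesgue measure; equivalently, there is no Lebesgue null set K ⊆ ℝ² with A × B ⊆ C ∪ K. -/

import Mathlib

open MeasureTheory

open Set Metric
open scoped ENNReal

noncomputable def myU : Set ℝ :=
  ⋃ n : ℕ, Ioo (((Denumerable.ofNat ℚ n : ℚ) : ℝ) - (1/2)^n) (((Denumerable.ofNat ℚ n : ℚ) : ℝ) + (1/2)^n)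

theorem myU_open : IsOpen myU := isOpen_iUnion fun _ => isOpen_Ioo

theorem myU_rat (q : ℚ) : (q : ℝ) ∈ myU := by
  obtain ⟨n, hn⟩ : ∃ n, Denumerable.ofNat ℚ n = q := ⟨_, Denumerable.ofNat_encode q⟩
  refine mem_iUnion.2 ⟨n, ?_⟩
  rw [hn]
  constructor <;> nlinarith [pow_pos (by norm_num : (0:ℝ) < 1/2) n]

theorem ofReal_half : ENNReal.ofReal (1/2 : ℝ) = 1/2 := by
  rw [one_div, one_div, ENNReal.ofReal_inv_of_pos (by norm_num), ENNReal.ofReal_ofNat]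

theorem myU_vol : volume myU < ⊤ := by
  calc volume myU ≤ ∑' n : ℕ, volume (Ioo (((Denumerable.ofNat ℚ n : ℚ) : ℝ) - (1/2)^n)
        (((Denumerable.ofNat ℚ n : ℚ) : ℝ) + (1/2)^n)) := measure_iUnion_le _
    _ ≤ ∑' n : ℕ, 2 * (1/2 : ℝ≥0∞)^n := by
        refine ENNReal.tsum_le_tsum fun n => ?_
        rw [Real.volume_Ioo]
        have h1 : ((Denumerable.ofNat ℚ n : ℚ) : ℝ) + (1/2)^n - (((Denumerable.ofNat ℚ n : ℚ) : ℝ) - (1/2)^n) = 2 * (1/2)^n := by ring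
        rw [h1, ENNReal.ofReal_mul (by norm_num), ENNReal.ofReal_pow (by norm_num), ofReal_half]
        gcongr
        norm_num
    _ < ⊤ := by
        rw [ENNReal.tsum_mul_left]
        refine ENNReal.mul_lt_top (by norm_num) ?_
        rw [one_div, ENNReal.tsum_geometric]
        simp [ENNReal.one_sub_inv_two]

noncomputable def myC : Set (ℝ × ℝ) := {p | p.1 - p.2 ∈ myUᶜ}

theorem myC_meas : MeasurableSet myC :=
  (measurable_fst.sub measurable_snd) myU_open.measurableSet.compl

theorem compl_vol : volume (myUᶜ) = ⊤ := by
  by_contra h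
  have h2 : volume (univ : Set ℝ) ≤ volume myU + volume myUᶜ := by
    rw [← union_compl_self myU]; exact measure_union_le _ _
  rw [Real.volume_univ] at h2
  have := ENNReal.add_lt_top.2 ⟨myU_vol, lt_top_iff_ne_top.2 h⟩
  simp_all

theorem myC_vol : volume myC = ⊤ := by
  rw [Measure.volume_eq_prod, Measure.prod_apply myC_meas]
  have hslice : ∀ x : ℝ, volume (Prod.mk x ⁻¹' myC) = ⊤ := by
    intro x
    have h : Prod.mk x ⁻¹' myC = Neg.neg ⁻¹' ((fun y => x + y) ⁻¹' myUᶜ) := by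
      ext y
      simp only [myC, mem_preimage, mem_setOf_eq]
      have : x - y = x + -y := by ring
      rw [this]
    rw [h, Measure.measure_preimage_neg, measure_preimage_add, compl_vol]
  simp only [hslice]
  simp [lintegral_const]

theorem density_pt {A : Set ℝ} (hA : 0 < volume A) :
    ∃ a : ℝ, ∃ ε : ℝ, 0 < ε ∧ ∀ r : ℝ, 0 < r → r ≤ ε →
      ENNReal.ofReal ((9/5) * r) ≤ volume (A ∩ Icc (a - r) (a + r)) := by
  have hres : (volume.restrict A) ≠ 0 := by
    intro h0
    rw [← Measure.restrict_apply_univ A, h0] at hA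
    simp at hA
  have : (ae (volume.restrict A)).NeBot := ae_neBot.2 hres
  obtain ⟨a, ha⟩ := (Besicovitch.ae_tendsto_measure_inter_div volume A).exists
  have h9 : ∀ᶠ r in nhdsWithin (0:ℝ) (Ioi 0),
      (9/10 : ℝ≥0∞) < volume (A ∩ closedBall a r) / volume (closedBall a r) :=
    ha.eventually (eventually_gt_nhds (by
      rw [ENNReal.div_lt_iff (Or.inl (by norm_num)) (Or.inl (by norm_num))]
      norm_num))
  obtain ⟨v, hv, hsub⟩ := Filter.eventually_iff_exists_mem.mp h9
  obtain ⟨ε, hε, hIoo⟩ := mem_nhdsGT_iff_exists_Ioo_subset.mp hv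
  have hε' : (0:ℝ) < ε := hε
  refine ⟨a, ε/2, by positivity, fun r hr hrε => ?_⟩
  clear hε
  have hrv : r ∈ v := hIoo ⟨hr, by linarith⟩
  have hlt := hsub r hrv
  rw [Real.closedBall_eq_Icc, Real.volume_Icc] at hlt
  have h2r : a + r - (a - r) = 2 * r := by ring
  rw [h2r] at hlt
  have := ENNReal.mul_lt_of_lt_div hlt
  calc ENNReal.ofReal ((9/5) * r) = (9/10 : ℝ≥0∞) * ENNReal.ofReal (2 * r) := by
        rw [show (9/10 : ℝ≥0∞) = ENNReal.ofReal (9/10) from by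
          rw [ENNReal.ofReal_div_of_pos (by norm_num)]; norm_num,
          ← ENNReal.ofReal_mul (by norm_num)]
        ring_nf
    _ ≤ volume (A ∩ Icc (a - r) (a + r)) := le_of_lt this


theorem main_rect {A B : Set ℝ} (hAm : MeasurableSet A) (hBm : MeasurableSet B)
    (hA : 0 < volume A) (hB : 0 < volume B) :
    0 < volume ((A ×ˢ B) \ myC) := by
  obtain ⟨a, εA, hεA, hda⟩ := density_pt hA
  obtain ⟨b, εB, hεB, hdb⟩ := density_pt hB
  set s : ℝ := min εA εB with hs_def
  have hs : 0 < s := lt_min hεA hεB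
  -- choose rational q close to a - b, and δ
  obtain ⟨q, hq1, hq2⟩ := exists_rat_btwn (show a - b - s/8 < a - b + s/8 by linarith)
  obtain ⟨δ0, hδ0, hball⟩ := Metric.isOpen_iff.mp myU_open (q : ℝ) (myU_rat q)
  set δ : ℝ := min (δ0/2) (s/8) with hδ_def
  have hδ : 0 < δ := lt_min (by linarith) (by linarith)
  have hδs : δ ≤ s/8 := min_le_right _ _
  have hIooU : Ioo ((q:ℝ) - δ) ((q:ℝ) + δ) ⊆ myU := by
    intro t ht
    apply hball
    rw [mem_ball, Real.dist_eq]
    have h1 : δ ≤ δ0/2 := min_le_left _ _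
    rw [abs_lt]
    constructor <;> [skip; skip] <;> cases' ht with h2 h3 <;> linarith
  set A₁ : Set ℝ := A ∩ Icc (a - s/2) (a + s/2) with hA₁_def
  set D : Set ℝ := Icc (b - s) (b + s) \ B with hD_def
  have hA₁m : MeasurableSet A₁ := hAm.inter measurableSet_Icc
  have hDm : MeasurableSet D := measurableSet_Icc.diff hBm
  set S : Set (ℝ × ℝ) := {p | p.1 ∈ A₁ ∧ p.1 - p.2 ∈ Ioo ((q:ℝ) - δ) ((q:ℝ) + δ)} with hS_def
  set T : Set (ℝ × ℝ) := {p | p.2 ∈ D ∧ p.1 - p.2 ∈ Ioo ((q:ℝ) - δ) ((q:ℝ) + δ)} with hT_def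
  have hStripm : MeasurableSet ((fun p : ℝ × ℝ => p.1 - p.2) ⁻¹' Ioo ((q:ℝ) - δ) ((q:ℝ) + δ)) :=
    (measurable_fst.sub measurable_snd) measurableSet_Ioo
  have hSm : MeasurableSet S := by
    have : S = (A₁ ×ˢ univ) ∩ ((fun p : ℝ × ℝ => p.1 - p.2) ⁻¹' Ioo ((q:ℝ) - δ) ((q:ℝ) + δ)) := by
      ext p; simp [hS_def, Set.mem_prod]
    rw [this]; exact (hA₁m.prod MeasurableSet.univ).inter hStripm
  have hTm : MeasurableSet T := by
    have : T = (univ ×ˢ D) ∩ ((fun p : ℝ × ℝ => p.1 - p.2) ⁻¹' Ioo ((q:ℝ) - δ) ((q:ℝ) + δ)) := by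
      ext p; simp [hT_def, Set.mem_prod, and_comm]
    rw [this]; exact (MeasurableSet.univ.prod hDm).inter hStripm
  -- volume of S
  have hvolS : volume S = ENNReal.ofReal (2*δ) * volume A₁ := by
    rw [Measure.volume_eq_prod, Measure.prod_apply hSm]
    have hsl : (fun x => volume (Prod.mk x ⁻¹' S)) =
        A₁.indicator (fun _ => ENNReal.ofReal (2*δ)) := by
      funext x
      by_cases hx : x ∈ A₁
      · have : Prod.mk x ⁻¹' S = Ioo (x - (q:ℝ) - δ) (x - (q:ℝ) + δ) := by
          ext y
          simp only [hS_def, mem_preimage, mem_setOf_eq, mem_Ioo, hx, true_and]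
          constructor <;> intro h <;> exact ⟨by linarith [h.1, h.2], by linarith [h.1, h.2]⟩
        rw [this, Real.volume_Ioo, indicator_of_mem hx]
        norm_num
        ring_nf
        rw [ENNReal.ofReal_mul' (by norm_num), ENNReal.ofReal_ofNat]
      · have : Prod.mk x ⁻¹' S = ∅ := by
          ext y; simp [hS_def, hx]
        rw [this, indicator_of_notMem hx]
        simp
    rw [hsl, lintegral_indicator hA₁m, setLIntegral_const]
  -- volume of T
  have hvolT : volume T = ENNReal.ofReal (2*δ) * volume D := by
    rw [Measure.volume_eq_prod, Measure.prod_apply_symm hTm]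
    have hsl : (fun y => volume ((fun x => (x, y)) ⁻¹' T)) =
        D.indicator (fun _ => ENNReal.ofReal (2*δ)) := by
      funext y
      by_cases hy : y ∈ D
      · have : (fun x => (x, y)) ⁻¹' T = Ioo (y + (q:ℝ) - δ) (y + (q:ℝ) + δ) := by
          ext x
          simp only [hT_def, mem_preimage, mem_setOf_eq, mem_Ioo, hy, true_and]
          constructor <;> intro h <;> exact ⟨by linarith [h.1, h.2], by linarith [h.1, h.2]⟩
        rw [this, Real.volume_Ioo, indicator_of_mem hy]
        norm_num
        ring_nf
        rw [ENNReal.ofReal_mul' (by norm_num), ENNReal.ofReal_ofNat]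
      · have : (fun x => (x, y)) ⁻¹' T = ∅ := by
          ext x; simp [hT_def, hy]
        rw [this, indicator_of_notMem hy]
        simp
    rw [hsl, lintegral_indicator hDm, setLIntegral_const]
  -- S \ T ⊆ (A ×ˢ B) \ C
  have hsub : S \ T ⊆ (A ×ˢ B) \ myC := by
    rintro ⟨x, y⟩ ⟨⟨⟨hxA, hxI⟩, hstrip⟩, hnT⟩
    have hxI' := hxI
    rw [mem_Icc] at hxI'
    have hyB : y ∈ B := by
      by_contra hyB
      apply hnT
      refine ⟨⟨?_, hyB⟩, hstrip⟩
      cases' hstrip with h1 h2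
      rw [mem_Icc]
      constructor <;> linarith
    refine ⟨⟨hxA, hyB⟩, ?_⟩
    intro hC
    exact hC (hIooU hstrip)
  -- lower bounds
  have hA₁vol : ENNReal.ofReal ((9/10)*s) ≤ volume A₁ := by
    have := hda (s/2) (by linarith) (by
      have : s ≤ εA := min_le_left _ _
      linarith)
    calc ENNReal.ofReal ((9/10)*s) = ENNReal.ofReal ((9/5)*(s/2)) := by ring_nf
      _ ≤ _ := this
  have hDvol : volume D ≤ ENNReal.ofReal ((1/5)*s) := by
    have hBIcc := hdb s hs (min_le_right _ _)
    have hD_eq : D = Icc (b - s) (b + s) \ (B ∩ Icc (b - s) (b + s)) := by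
      rw [hD_def, diff_inter_self_eq_diff]
    have hfin : volume (B ∩ Icc (b - s) (b + s)) ≠ ⊤ := by
      refine ne_top_of_le_ne_top ?_ (measure_mono inter_subset_right)
      rw [Real.volume_Icc]
      exact ENNReal.ofReal_ne_top
    rw [hD_eq, measure_diff inter_subset_right (hBm.inter measurableSet_Icc).nullMeasurableSet hfin,
      Real.volume_Icc]
    have h2s : b + s - (b - s) = 2*s := by ring
    rw [h2s]
    calc ENNReal.ofReal (2*s) - volume (B ∩ Icc (b - s) (b + s))
        ≤ ENNReal.ofReal (2*s) - ENNReal.ofReal ((9/5)*s) := tsub_le_tsub_left hBIcc _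
      _ = ENNReal.ofReal (2*s - (9/5)*s) := by
          rw [ENNReal.ofReal_sub _ (by positivity)]
      _ = ENNReal.ofReal ((1/5)*s) := by ring_nf
  have key : ENNReal.ofReal (2*δ) * ENNReal.ofReal ((9/10)*s)
      - ENNReal.ofReal (2*δ) * ENNReal.ofReal ((1/5)*s) ≤ volume ((A ×ˢ B) \ myC) := by
    calc ENNReal.ofReal (2*δ) * ENNReal.ofReal ((9/10)*s)
        - ENNReal.ofReal (2*δ) * ENNReal.ofReal ((1/5)*s)
        ≤ volume S - volume T := by
          rw [hvolS, hvolT]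
          exact tsub_le_tsub (by gcongr) (by gcongr)
      _ ≤ volume (S \ T) := le_measure_diff
      _ ≤ _ := measure_mono hsub
  refine lt_of_lt_of_le ?_ key
  rw [← ENNReal.ofReal_mul (by positivity), ← ENNReal.ofReal_mul (by positivity),
    ← ENNReal.ofReal_sub _ (by positivity), ENNReal.ofReal_pos]
  nlinarith

/-- the pair `(Bor(ℝ²), 𝒩)` does not have the positive rectangle property:
there is a Borel set `C ⊆ ℝ²` of positive measure such that every positive Borel rectangle
`A × B` meets the complement of `C` in positive measure; equivalently, no null set `K`
satisfies `A × B ⊆ C ∪ K`. -/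
theorem borel_null_not_prp :
    ∃ C : Set (ℝ × ℝ), MeasurableSet C ∧ 0 < volume C ∧
      ∀ A B : Set ℝ, MeasurableSet A → MeasurableSet B →
        0 < volume A → 0 < volume B →
        0 < volume ((A ×ˢ B) \ C) ∧
        ¬ ∃ K : Set (ℝ × ℝ), volume K = 0 ∧ A ×ˢ B ⊆ C ∪ K := by
  refine ⟨myC, myC_meas, by rw [myC_vol]; exact ENNReal.zero_lt_top, fun A B hAm hBm hA hB => ?_⟩
  have hpos := main_rect hAm hBm hA hB
  refine ⟨hpos, ?_⟩
  rintro ⟨K, hK0, hKsub⟩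
  have hsub : (A ×ˢ B) \ myC ⊆ K := by
    rintro p ⟨hpAB, hpC⟩
    rcases hKsub hpAB with h | h
    · exact absurd h hpC
    · exact h
  exact absurd (lt_of_lt_of_le hpos (le_trans (measure_mono hsub) (le_of_eq hK0))) (by simp)
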